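/- PolyRat is closed under Cauchy product: if u and v belong to PolyRat, then so does the sequence w with w_n = Σ_{p+q=n} u_p·v_q. -/

import Mathlib

/-- The smallest class of sequences `ℕ → ℚ` containing all arithmetic and all geometric
sequences and closed under sum, Hadamard product, shift, and `k`-ary shuffle for `k ≥ 1`. -/
inductive PolyRat : (ℕ → ℚ) → Prop where
  | arith (a b : ℚ) (u : ℕ → ℚ) (h0 : u 0 = a) (hs : ∀ n, u (n + 1) = u n + b) : PolyRat u
  | geo (a l : ℚ) (u : ℕ → ℚ) (h0 : u 0 = a) (hs : ∀ n, u (n + 1) = l * u n) : PolyRat u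
  | sum (u v : ℕ → ℚ) (hu : PolyRat u) (hv : PolyRat v) : PolyRat (fun n => u n + v n)
  | had (u v : ℕ → ℚ) (hu : PolyRat u) (hv : PolyRat v) : PolyRat (fun n => u n * v n)
  | shift (a : ℚ) (u w : ℕ → ℚ) (hu : PolyRat u) (h0 : w 0 = a)
      (hs : ∀ n, w (n + 1) = u n) : PolyRat w
  | shuffle (k : ℕ) (hk : 1 ≤ k) (us : Fin k → ℕ → ℚ) (w : ℕ → ℚ)
      (hw : ∀ (n : ℕ) (i : Fin k), w (k * n + (i : ℕ)) = us i n)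
      (hus : ∀ i, PolyRat (us i)) : PolyRat w

/-- Cauchy product of sequences: `(u·v)_n = Σ_{p+q=n} u_p · v_q`. -/
def cauchyProd (u v : ℕ → ℚ) : ℕ → ℚ :=
  fun n => ∑ p ∈ Finset.range (n + 1), u p * v (n - p)

open Finset

def ExpPoly : Submodule ℚ (ℕ → ℚ) :=
  Submodule.span ℚ {f | ∃ c : ℚ, ∃ j : ℕ, f = fun n : ℕ => (n : ℚ) ^ j * c ^ n}

lemma basic_mem (j : ℕ) (c : ℚ) : (fun n : ℕ => (n : ℚ) ^ j * c ^ n) ∈ ExpPoly :=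
  Submodule.subset_span ⟨c, j, rfl⟩

lemma expPoly_congr {u v : ℕ → ℚ} (h : ∀ n, u n = v n) (hu : u ∈ ExpPoly) : v ∈ ExpPoly :=
  (funext h : u = v) ▸ hu

lemma const_mem (q : ℚ) : (fun _ : ℕ => q) ∈ ExpPoly := by
  have := ExpPoly.smul_mem q (basic_mem 0 1)
  exact expPoly_congr (fun n => by simp) this

lemma mul_mem'' {u v : ℕ → ℚ} (hu : u ∈ ExpPoly) (hv : v ∈ ExpPoly) :
    (fun n => u n * v n) ∈ ExpPoly := by
  unfold ExpPoly at hu hv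
  induction hu using Submodule.span_induction with
  | mem x hx =>
    obtain ⟨c, j, rfl⟩ := hx
    induction hv using Submodule.span_induction with
    | mem y hy =>
      obtain ⟨d, k, rfl⟩ := hy
      refine expPoly_congr (u := fun n : ℕ => (n:ℚ)^(j+k) * (c*d)^n) (fun n => by
        simp only [pow_add, mul_pow]; ring) (basic_mem _ _)
    | zero => exact expPoly_congr (u := 0) (fun n => by simp) (zero_mem _)
    | add y z hy hz ihy ihz =>
      exact expPoly_congr (u := fun n : ℕ => (((n:ℚ)^j*c^n) * y n) + (((n:ℚ)^j*c^n) * z n))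
        (fun n => by simp [Pi.add_apply]; ring) (ExpPoly.add_mem ihy ihz)
    | smul a y hy ihy =>
      exact expPoly_congr (u := fun n : ℕ => a * (((n:ℚ)^j*c^n) * y n))
        (fun n => by simp [Pi.smul_apply]; ring)
        (expPoly_congr (fun n => by simp) (ExpPoly.smul_mem a ihy))
  | zero => exact expPoly_congr (u := 0) (fun n => by simp) (zero_mem _)
  | add x y hx hy ihx ihy =>
    exact expPoly_congr (u := fun n : ℕ => (x n * v n) + (y n * v n))
      (fun n => by simp [Pi.add_apply]; ring) (ExpPoly.add_mem ihx ihy)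
  | smul a x hx ihx =>
    exact expPoly_congr (u := fun n : ℕ => a * (x n * v n))
      (fun n => by simp [Pi.smul_apply]; ring)
      (expPoly_congr (fun n => by simp) (ExpPoly.smul_mem a ihx))

lemma comp_mem {e : ℕ → ℚ} (he : e ∈ ExpPoly) (d q : ℕ) :
    (fun n => e (d * n + q)) ∈ ExpPoly := by
  unfold ExpPoly at he
  induction he using Submodule.span_induction with
  | mem x hx =>
    obtain ⟨c, j, rfl⟩ := hx
    refine expPoly_congr
      (u := ∑ i ∈ range (j+1),
        ((j.choose i : ℚ) * (d:ℚ)^i * (q:ℚ)^(j-i) * c^q) • (fun n : ℕ => (n:ℚ)^i * (c^d)^n))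
      (fun n => ?_)
      (Submodule.sum_mem _ fun i _ => ExpPoly.smul_mem _ (basic_mem i (c^d)))
    have h1 : ((d * n + q : ℕ) : ℚ) ^ j
        = ∑ i ∈ range (j+1), ((d:ℚ)*n)^i * (q:ℚ)^(j-i) * (j.choose i : ℚ) := by
      push_cast
      rw [add_pow]
    have h2 : c ^ (d * n + q) = (c^d)^n * c^q := by
      rw [pow_add, pow_mul]
    rw [Finset.sum_apply]
    simp only [Pi.smul_apply, smul_eq_mul]
    rw [h1, h2, Finset.sum_mul]
    refine Finset.sum_congr rfl fun i _ => ?_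
    rw [mul_pow]
    ring
  | zero => exact expPoly_congr (u := 0) (fun n => by simp) (zero_mem _)
  | add x y hx hy ihx ihy =>
    exact expPoly_congr (u := fun n : ℕ => x (d*n+q) + y (d*n+q))
      (fun n => by simp [Pi.add_apply]) (ExpPoly.add_mem ihx ihy)
  | smul a x hx ihx =>
    exact expPoly_congr (u := fun n : ℕ => a * x (d*n+q))
      (fun n => by simp [Pi.smul_apply])
      (expPoly_congr (fun n => by simp) (ExpPoly.smul_mem a ihx))

lemma pred_mem {e : ℕ → ℚ} (he : e ∈ ExpPoly) :
    ∃ e' ∈ ExpPoly, ∃ N : ℕ, ∀ n ≥ N, e' n = e (n - 1) := by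
  unfold ExpPoly at he
  induction he using Submodule.span_induction with
  | mem x hx =>
    obtain ⟨c, j, rfl⟩ := hx
    by_cases hc : c = 0
    · refine ⟨0, zero_mem _, 2, fun n hn => ?_⟩
      subst hc
      have h1 : (0:ℚ) ^ (n-1) = 0 := by
        apply zero_pow
        omega
      simp [h1]
    · refine ⟨∑ i ∈ range (j+1),
        ((j.choose i : ℚ) * (-1)^(j-i) * c⁻¹) • (fun n : ℕ => (n:ℚ)^i * c^n),
        Submodule.sum_mem _ fun i _ => ExpPoly.smul_mem _ (basic_mem i c), 1, fun n hn => ?_⟩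
      have h1 : ((n - 1 : ℕ) : ℚ) = (n:ℚ) - 1 := by
        have : (1:ℕ) ≤ n := hn
        push_cast [this]
        ring
      have h2 : c ^ (n - 1) = c ^ n * c⁻¹ := by
        have : n - 1 + 1 = n := by omega
        rw [← this, pow_succ]
        field_simp
        rw [Nat.add_sub_cancel]
      have h3 : ((n:ℚ) - 1) ^ j = ∑ i ∈ range (j+1), (n:ℚ)^i * (-1:ℚ)^(j-i) * (j.choose i : ℚ) := by
        have := add_pow (n:ℚ) (-1) j
        rw [show (n:ℚ) - 1 = (n:ℚ) + -1 by ring]; exact this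
      rw [Finset.sum_apply]
      simp only [Pi.smul_apply, smul_eq_mul]
      rw [h1, h2, h3, Finset.sum_mul]
      refine Finset.sum_congr rfl fun i _ => ?_
      ring
  | zero => exact ⟨0, zero_mem _, 0, fun n _ => by simp⟩
  | add x y hx hy ihx ihy =>
    obtain ⟨ex, hexE, Nx, hex⟩ := ihx
    obtain ⟨ey, heyE, Ny, hey⟩ := ihy
    exact ⟨ex + ey, ExpPoly.add_mem hexE heyE, max Nx Ny, fun n hn => by
      simp only [Pi.add_apply]
      rw [hex n (le_trans (le_max_left _ _) hn), hey n (le_trans (le_max_right _ _) hn)]⟩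
  | smul a x hx ihx =>
    obtain ⟨ex, hexE, Nx, hex⟩ := ihx
    exact ⟨a • ex, ExpPoly.smul_mem a hexE, Nx, fun n hn => by
      simp only [Pi.smul_apply, smul_eq_mul]
      rw [hex n hn]⟩

lemma G_mem (j : ℕ) (c : ℚ) :
    (fun t : ℕ => ∑ s ∈ range (t+1), (s:ℚ)^j * c^s) ∈ ExpPoly := by
  induction j using Nat.strong_induction_on with
  | _ j ih =>
  rcases eq_or_ne c 1 with rfl | hc
  · refine expPoly_congr
      (u := ∑ i ∈ range (j+1),
        (bernoulli i * ((j+1).choose i : ℚ) / ((j:ℚ)+1)) • (fun t : ℕ => ((t:ℚ)+1)^(j+1-i)))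
      (fun t => ?_)
      (Submodule.sum_mem _ fun i _ => ExpPoly.smul_mem _
        (expPoly_congr (fun n => by push_cast; simp) (comp_mem (basic_mem (j+1-i) 1) 1 1)))
    have hb := sum_range_pow (t+1) j
    push_cast at hb
    rw [Finset.sum_apply]
    simp only [Pi.smul_apply, smul_eq_mul, one_pow, mul_one]
    rw [hb]
    exact Finset.sum_congr rfl fun i _ => by ring
  · have hc1 : c - 1 ≠ 0 := sub_ne_zero.mpr hc
    have key : ∀ t : ℕ, (c - 1) * (∑ s ∈ range (t+1), (s:ℚ)^j * c^s)
        = ((t:ℚ)+1)^j * c^(t+1) - (0:ℚ)^j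
          - c * ∑ i ∈ range j, (j.choose i : ℚ) * ∑ s ∈ range (t+1), (s:ℚ)^i * c^s := by
      intro t
      have h1 : ∀ s : ℕ, ((s:ℚ)+1)^j * c^(s+1) - (s:ℚ)^j * c^s
          = (c-1) * ((s:ℚ)^j * c^s)
            + c * ∑ i ∈ range j, (j.choose i : ℚ) * ((s:ℚ)^i * c^s) := by
        intro s
        have hb : ((s:ℚ)+1)^j = ∑ i ∈ range (j+1), (s:ℚ)^i * (j.choose i : ℚ) := by
          have := add_pow (s:ℚ) 1 j
          simpa using this
        rw [hb, sum_range_succ, Nat.choose_self, Nat.cast_one, mul_one, add_mul, sum_mul]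
        rw [Finset.sum_congr rfl (fun i (_ : i ∈ range j) =>
          show ((s:ℚ)^i * (j.choose i:ℚ)) * c^(s+1) = c * ((j.choose i:ℚ) * ((s:ℚ)^i * c^s))
          from by ring), ← Finset.mul_sum]
        ring
      have tel := Finset.sum_range_sub (fun s : ℕ => ((s:ℚ))^j * c^s) (t+1)
      push_cast at tel
      simp only [pow_zero, mul_one] at tel
      have expand : ∑ s ∈ range (t+1), (((s:ℚ)+1)^j * c^(s+1) - (s:ℚ)^j * c^s)
          = (c-1) * (∑ s ∈ range (t+1), (s:ℚ)^j * c^s)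
            + c * ∑ i ∈ range j, (j.choose i:ℚ) * ∑ s ∈ range (t+1), (s:ℚ)^i * c^s := by
        rw [Finset.sum_congr rfl (fun s _ => h1 s), sum_add_distrib, ← Finset.mul_sum,
          ← Finset.mul_sum, Finset.sum_comm]
        congr 1
        congr 1
        exact Finset.sum_congr rfl fun i _ => (Finset.mul_sum _ _ _).symm
      rw [expand] at tel
      linarith [tel]
    refine expPoly_congr
      (u := (c-1)⁻¹ • ((fun t : ℕ => ((t:ℚ)+1)^j * c^(t+1))
        - (fun _ : ℕ => (0:ℚ)^j)
        - c • ∑ i ∈ range j, ((j.choose i : ℚ)) • (fun t : ℕ => ∑ s ∈ range (t+1), (s:ℚ)^i * c^s)))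
      (fun t => ?_) ?_
    · simp only [Pi.smul_apply, Pi.sub_apply, Finset.sum_apply, smul_eq_mul]
      rw [← key t, inv_mul_cancel_left₀ hc1]
    · exact ExpPoly.smul_mem _ (Submodule.sub_mem _
        (Submodule.sub_mem _
          (expPoly_congr (fun n => by push_cast; simp) (comp_mem (basic_mem j c) 1 1))
          (const_mem _))
        (ExpPoly.smul_mem _ (Submodule.sum_mem _ fun i hi =>
          ExpPoly.smul_mem _ (ih i (mem_range.mp hi)))))

lemma partialSum_mem {e : ℕ → ℚ} (he : e ∈ ExpPoly) :
    (fun t : ℕ => ∑ s ∈ range (t+1), e s) ∈ ExpPoly := by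
  unfold ExpPoly at he
  induction he using Submodule.span_induction with
  | mem x hx =>
    obtain ⟨c, j, rfl⟩ := hx
    exact G_mem j c
  | zero => exact expPoly_congr (u := 0) (fun n => by simp) (zero_mem _)
  | add x y hx hy ihx ihy =>
    exact expPoly_congr (u := fun t : ℕ => (∑ s ∈ range (t+1), x s) + (∑ s ∈ range (t+1), y s))
      (fun t => by simp [Pi.add_apply, sum_add_distrib]) (ExpPoly.add_mem ihx ihy)
  | smul a x hx ihx =>
    exact expPoly_congr (u := fun t : ℕ => a * (∑ s ∈ range (t+1), x s))
      (fun t => by simp [Pi.smul_apply, Finset.mul_sum])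
      (expPoly_congr (fun n => by simp) (ExpPoly.smul_mem a ihx))

lemma cauchyProd_comm (u v : ℕ → ℚ) : ∀ n, cauchyProd u v n = cauchyProd v u n := by
  intro n
  simp only [cauchyProd]
  rw [← Finset.sum_range_reflect (fun p => v p * u (n - p)) (n+1)]
  refine Finset.sum_congr rfl fun j hj => ?_
  have hj' : j ≤ n := by simpa [Nat.lt_succ_iff] using hj
  have h1 : n + 1 - 1 - j = n - j := by omega
  have h2 : n - (n - j) = j := by omega
  simp only [h1, h2]
  ring

lemma cauchyProd_basic_mem (j : ℕ) (a : ℚ) :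
    ∀ v ∈ ExpPoly, cauchyProd (fun n : ℕ => (n:ℚ)^j * a^n) v ∈ ExpPoly := by
  induction j with
  | zero =>
    intro v hv
    by_cases ha : a = 0
    · subst ha
      refine expPoly_congr (u := v) (fun t => ?_) hv
      have : ∑ p ∈ range (t+1), ((p:ℚ)^0 * (0:ℚ)^p) * v (t - p) = ((0:ℚ)^0*(0:ℚ)^0) * v t := by
        rw [Finset.sum_eq_single 0 (fun p _ hp0 => by simp [zero_pow hp0])
          (fun h => absurd (mem_range.mpr (by omega)) h)]
        simp
      simp only [cauchyProd]
      rw [this]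
      simp
    · refine expPoly_congr
        (u := fun t : ℕ => ((t:ℚ)^0 * a^t) * (∑ s ∈ range (t+1), ((s:ℚ)^0 * (a⁻¹)^s) * v s))
        (fun t => ?_)
        (mul_mem'' (basic_mem 0 a) (partialSum_mem (mul_mem'' (basic_mem 0 a⁻¹) hv)))
      simp only [cauchyProd, pow_zero, one_mul]
      rw [Finset.mul_sum, ← Finset.sum_range_reflect (fun p => a^p * v (t - p)) (t+1)]
      refine Finset.sum_congr rfl fun s hs => ?_
      have hs' : s ≤ t := by simpa [Nat.lt_succ_iff] using hs
      have h1 : t + 1 - 1 - s = t - s := by omega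
      have h2 : t - (t - s) = s := by omega
      have h3 : a ^ (t - s) = a^t * (a⁻¹)^s := by
        have h4 : a^(t-s) * a^s = a^t := by
          rw [← pow_add]
          congr 1
          omega
        rw [inv_pow, eq_mul_inv_iff_mul_eq₀ (pow_ne_zero s ha)]
        exact h4
      simp only [h1, h2]
      rw [h3]
      ring
  | succ j ihj =>
    intro v hv
    refine expPoly_congr
      (u := fun t : ℕ => ((t:ℚ)^1 * (1:ℚ)^t) * cauchyProd (fun n : ℕ => (n:ℚ)^j * a^n) v t
        - cauchyProd (fun n : ℕ => (n:ℚ)^j * a^n) (fun n : ℕ => ((n:ℚ)^1 * (1:ℚ)^n) * v n) t)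
      (fun t => ?_)
      (Submodule.sub_mem _ (mul_mem'' (basic_mem 1 1) (ihj v hv))
        (ihj _ (mul_mem'' (basic_mem 1 1) hv)))
    simp only [cauchyProd, pow_one, one_pow, mul_one, one_mul]
    rw [Finset.mul_sum, ← Finset.sum_sub_distrib]
    refine Finset.sum_congr rfl fun p hp => ?_
    have hp' : p ≤ t := by simpa [Nat.lt_succ_iff] using hp
    have h1 : ((t - p : ℕ) : ℚ) = (t:ℚ) - (p:ℚ) := by
      push_cast [hp']
      ring
    rw [h1]
    ring

lemma cauchyProd_mem {u v : ℕ → ℚ} (hu : u ∈ ExpPoly) (hv : v ∈ ExpPoly) :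
    cauchyProd u v ∈ ExpPoly := by
  unfold ExpPoly at hu
  induction hu using Submodule.span_induction with
  | mem x hx =>
    obtain ⟨c, k, rfl⟩ := hx
    exact cauchyProd_basic_mem k c v hv
  | zero =>
    refine expPoly_congr (u := 0) (fun n => ?_) (zero_mem _)
    simp [cauchyProd]
  | add x y hx hy ihx ihy =>
    refine expPoly_congr (u := fun n => cauchyProd x v n + cauchyProd y v n) (fun n => ?_)
      (ExpPoly.add_mem ihx ihy)
    simp [cauchyProd, add_mul, sum_add_distrib]
  | smul b x hx ihx =>
    refine expPoly_congr (u := fun n => b * cauchyProd x v n) (fun n => ?_)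
      (expPoly_congr (fun n => by simp) (ExpPoly.smul_mem b ihx))
    simp [cauchyProd, smul_eq_mul, Finset.mul_sum, mul_assoc]

/-! ### The Nice layer: eventual interlacings of exponential polynomials -/

def NiceW (m : ℕ) (u : ℕ → ℚ) : Prop :=
  ∀ r < m, ∃ e ∈ ExpPoly, ∃ N : ℕ, ∀ n ≥ N, u (m * n + r) = e n

def Nice (u : ℕ → ℚ) : Prop := ∃ m, 1 ≤ m ∧ NiceW m u

lemma nice_congr {u v : ℕ → ℚ} (h : ∀ n, u n = v n) (hu : Nice u) : Nice v :=
  (funext h : u = v) ▸ hu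

lemma exists_uniform {P : ℕ → ℕ → Prop}
    (mono : ∀ r N N', N ≤ N' → P r N → P r N') :
    ∀ m, (∀ r < m, ∃ N, P r N) → ∃ N, ∀ r < m, P r N := by
  intro m
  induction m with
  | zero => exact fun _ => ⟨0, fun r hr => absurd hr (by omega)⟩
  | succ m ih =>
    intro h
    obtain ⟨N, hN⟩ := ih (fun r hr => h r (by omega))
    obtain ⟨N', hN'⟩ := h m (by omega)
    refine ⟨max N N', fun r hr => ?_⟩
    rcases Nat.lt_succ_iff_lt_or_eq.mp hr with h' | rfl
    · exact mono r N _ (le_max_left _ _) (hN r h')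
    · exact mono r N' _ (le_max_right _ _) hN'

lemma niceW_uniform {m : ℕ} {u : ℕ → ℚ} (h : NiceW m u) :
    ∃ N, ∀ r < m, ∃ e ∈ ExpPoly, ∀ n ≥ N, u (m*n+r) = e n := by
  refine exists_uniform (P := fun r N => ∃ e ∈ ExpPoly, ∀ n ≥ N, u (m*n+r) = e n) ?_ m ?_
  · rintro r N N' hNN ⟨e, heE, he⟩
    exact ⟨e, heE, fun n hn => he n (le_trans hNN hn)⟩
  · intro r hr
    obtain ⟨e, heE, N, he⟩ := h r hr
    exact ⟨N, e, heE, he⟩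

lemma niceW_mul {m : ℕ} {u : ℕ → ℚ} (d : ℕ) (hd : 1 ≤ d) (h : NiceW m u) :
    NiceW (d * m) u := by
  intro r' hr'
  rcases Nat.eq_zero_or_pos m with rfl | hm
  · simp at hr'
  obtain ⟨e, heE, N, he⟩ := h (r' % m) (Nat.mod_lt _ hm)
  refine ⟨fun n => e (d*n + r'/m), comp_mem heE d (r'/m), N, fun n hn => ?_⟩
  have hidx : d*m*n + r' = m*(d*n + r'/m) + r'%m := by
    conv_lhs => rw [← Nat.div_add_mod r' m]
    ring
  rw [hidx, he _ (le_trans hn (le_trans (Nat.le_mul_of_pos_left n hd) (Nat.le_add_right _ _)))]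

lemma nice_pair {u v : ℕ → ℚ} (hu : Nice u) (hv : Nice v) :
    ∃ m, 1 ≤ m ∧ NiceW m u ∧ NiceW m v := by
  obtain ⟨m1, hm1, h1⟩ := hu
  obtain ⟨m2, hm2, h2⟩ := hv
  exact ⟨m2 * m1, le_trans hm1 (Nat.le_mul_of_pos_left m1 hm2),
    niceW_mul m2 hm2 h1, (Nat.mul_comm m1 m2) ▸ niceW_mul m1 hm1 h2⟩

lemma nice_sum {u v : ℕ → ℚ} (hu : Nice u) (hv : Nice v) : Nice (fun n => u n + v n) := by
  obtain ⟨m, hm, h1, h2⟩ := nice_pair hu hv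
  refine ⟨m, hm, fun r hr => ?_⟩
  obtain ⟨e, heE, N1, he⟩ := h1 r hr
  obtain ⟨f, hfE, N2, hf⟩ := h2 r hr
  refine ⟨fun n => e n + f n, ExpPoly.add_mem heE hfE, max N1 N2, fun n hn => ?_⟩
  show u (m*n+r) + v (m*n+r) = e n + f n
  rw [he n (le_trans (le_max_left _ _) hn), hf n (le_trans (le_max_right _ _) hn)]

lemma nice_had {u v : ℕ → ℚ} (hu : Nice u) (hv : Nice v) : Nice (fun n => u n * v n) := by
  obtain ⟨m, hm, h1, h2⟩ := nice_pair hu hv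
  refine ⟨m, hm, fun r hr => ?_⟩
  obtain ⟨e, heE, N1, he⟩ := h1 r hr
  obtain ⟨f, hfE, N2, hf⟩ := h2 r hr
  refine ⟨fun n => e n * f n, mul_mem'' heE hfE, max N1 N2, fun n hn => ?_⟩
  show u (m*n+r) * v (m*n+r) = e n * f n
  rw [he n (le_trans (le_max_left _ _) hn), hf n (le_trans (le_max_right _ _) hn)]

lemma nice_smul (c : ℚ) {u : ℕ → ℚ} (hu : Nice u) : Nice (fun n => c * u n) := by
  obtain ⟨m, hm, h⟩ := hu
  refine ⟨m, hm, fun r hr => ?_⟩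
  obtain ⟨e, heE, N, he⟩ := h r hr
  refine ⟨fun n => c * e n, expPoly_congr (fun n => by simp) (ExpPoly.smul_mem c heE),
    N, fun n hn => ?_⟩
  show c * u (m*n+r) = c * e n
  rw [he n hn]

lemma nice_zero : Nice (fun _ : ℕ => (0:ℚ)) :=
  ⟨1, le_refl 1, fun r hr => ⟨0, zero_mem _, 0, fun n _ => by simp⟩⟩

lemma nice_shift {a : ℚ} {u w : ℕ → ℚ} (hu : Nice u) (h0 : w 0 = a)
    (hs : ∀ n, w (n+1) = u n) : Nice w := by
  obtain ⟨m, hm, h⟩ := hu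
  refine ⟨m, hm, fun r hr => ?_⟩
  rcases Nat.eq_zero_or_pos r with rfl | hr1
  · obtain ⟨e, heE, N, he⟩ := h (m-1) (by omega)
    obtain ⟨e', he'E, N', he'⟩ := pred_mem heE
    refine ⟨e', he'E, N' + N + 1, fun n hn => ?_⟩
    have hidx : m * n + 0 = (m*(n-1) + (m-1)) + 1 := by
      have h2 : m * n = m * (n-1) + m := by
        calc m * n = m * ((n-1)+1) := by rw [show n-1+1 = n from by omega]
        _ = m*(n-1) + m := by ring
      omega
    rw [hidx, hs, he (n-1) (by omega), he' n (by omega)]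
  · obtain ⟨e, heE, N, he⟩ := h (r-1) (by omega)
    refine ⟨e, heE, N, fun n hn => ?_⟩
    have hidx : m*n + r = (m*n + (r-1)) + 1 := by omega
    rw [hidx, hs, he n hn]

def shiftK (p : ℕ) (v : ℕ → ℚ) : ℕ → ℚ := fun n => if n < p then 0 else v (n - p)

lemma nice_shiftK (p : ℕ) {v : ℕ → ℚ} (hv : Nice v) : Nice (shiftK p v) := by
  induction p with
  | zero => exact nice_congr (fun n => by simp [shiftK]) hv
  | succ p ih =>
    refine nice_shift (a := shiftK (p+1) v 0) ih rfl (fun n => ?_)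
    simp only [shiftK]
    by_cases h : n < p
    · rw [if_pos (by omega), if_pos h]
    · rw [if_neg (by omega), if_neg h, show n+1-(p+1) = n-p from by omega]

lemma nice_cauchy_finsupp {dd v : ℕ → ℚ} (M : ℕ) (hd : ∀ n ≥ M, dd n = 0) (hv : Nice v) :
    Nice (cauchyProd dd v) := by
  have hsum : ∀ K : ℕ, Nice (fun n => ∑ p ∈ range K, dd p * shiftK p v n) := by
    intro K
    induction K with
    | zero => exact nice_congr (fun n => by simp) nice_zero
    | succ K ih =>
      exact nice_congr
        (u := fun n => (∑ p ∈ range K, dd p * shiftK p v n) + dd K * shiftK K v n)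
        (fun n => (sum_range_succ _ K).symm)
        (nice_sum ih (nice_smul _ (nice_shiftK K hv)))
  refine nice_congr (u := fun n => ∑ p ∈ range M, dd p * shiftK p v n) (fun n => ?_) (hsum M)
  have hL : cauchyProd dd v n = ∑ p ∈ range (M+n+1), (if p ≤ n then dd p * v (n-p) else 0) := by
    rw [show cauchyProd dd v n = ∑ p ∈ range (n+1), (if p ≤ n then dd p * v (n-p) else 0) from
      Finset.sum_congr rfl (fun p hp => (if_pos (by simp [Nat.lt_succ_iff] at hp; exact hp)).symm)]
    refine Finset.sum_subset (range_subset_range.mpr (by omega)) (fun x hx hxn => ?_)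
    rw [if_neg (by simp [mem_range] at hxn; omega)]
  have hR : (∑ p ∈ range M, dd p * shiftK p v n)
      = ∑ p ∈ range (M+n+1), (if p ≤ n then dd p * v (n-p) else 0) := by
    rw [Finset.sum_subset (range_subset_range.mpr (show M ≤ M+n+1 by omega))
      (fun x hx hxM => by rw [hd x (by simp [mem_range] at hxM; omega), zero_mul])]
    refine Finset.sum_congr rfl (fun p hp => ?_)
    by_cases hpn : p ≤ n
    · rw [if_pos hpn]
      simp only [shiftK]
      rw [if_neg (by omega)]
    · rw [if_neg hpn]
      simp only [shiftK]
      rw [if_pos (by omega), mul_zero]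
  show (∑ p ∈ range M, dd p * shiftK p v n) = cauchyProd dd v n
  rw [hR, hL]

lemma interlace_eval {m : ℕ} (hm : 1 ≤ m) (es : ℕ → ℕ → ℚ) :
    ∀ x y, y < m → (fun n => es (n % m) (n / m)) (m*x+y) = es y x := by
  intro x y hy
  have h1 : (m*x+y) % m = y := by
    rw [Nat.mul_add_mod]
    exact Nat.mod_eq_of_lt hy
  have h2 : (m*x+y) / m = x := by
    rw [Nat.mul_add_div hm]
    simp [Nat.div_eq_of_lt hy]
  simp only [h1, h2]

lemma nice_interlace {m : ℕ} (hm : 1 ≤ m) (es : ℕ → ℕ → ℚ)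
    (hes : ∀ r < m, es r ∈ ExpPoly) :
    NiceW m (fun n => es (n % m) (n / m)) := by
  intro r hr
  exact ⟨es r, hes r hr, 0, fun n _ => interlace_eval hm es n r hr⟩

lemma niceW_exact_decomp {m : ℕ} {u : ℕ → ℚ} (hm : 1 ≤ m) (h : NiceW m u) :
    ∃ es : ℕ → ℕ → ℚ, (∀ r < m, es r ∈ ExpPoly) ∧
      ∃ M, ∀ n ≥ M, u n = es (n % m) (n / m) := by
  obtain ⟨N, hN⟩ := niceW_uniform h
  choose es hesE hes using fun r (hr : r < m) => hN r hr
  refine ⟨fun r => if h' : r < m then es r h' else 0, fun r hr => ?_, m*N, fun n hn => ?_⟩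
  · show (if h' : r < m then es r h' else 0) ∈ ExpPoly
    rw [dif_pos hr]
    exact hesE r hr
  have h1 : n % m < m := Nat.mod_lt _ hm
  have h2 : N ≤ n / m := by
    rw [Nat.le_div_iff_mul_le hm, mul_comm]
    exact hn
  show u n = (if h' : n % m < m then es (n % m) h' else 0) (n / m)
  rw [dif_pos h1]
  calc u n = u (m*(n/m) + n%m) := by rw [Nat.div_add_mod]
  _ = es (n%m) h1 (n/m) := hes (n%m) h1 (n/m) h2

lemma sum_range_split (f : ℕ → ℚ) (a b : ℕ) :
    ∑ p ∈ range (a+b), f p = (∑ p ∈ range a, f p) + ∑ i ∈ range b, f (a+i) := by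
  exact Finset.sum_range_add f a b

lemma sum_range_blocks (g : ℕ → ℚ) (m t : ℕ) :
    ∑ p ∈ range (m*t), g p = ∑ s ∈ range t, ∑ i ∈ range m, g (m*s+i) := by
  induction t with
  | zero => simp
  | succ t ih =>
    rw [show m*(t+1) = m*t + m from by ring, sum_range_split, ih, sum_range_succ]

lemma idx1 (m t s r i : ℕ) (hst : s < t) (hir : i ≤ r) :
    m*t + r - (m*s+i) = m*(t-s) + (r-i) := by
  have h1 : m*t = m*(t-s) + m*s := by
    calc m*t = m*((t-s)+s) := by rw [Nat.sub_add_cancel (le_of_lt hst)]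
    _ = m*(t-s)+m*s := mul_add m _ _
  rw [h1]
  generalize m*(t-s) = A
  generalize m*s = B
  omega

lemma idx2 (m t s r i : ℕ) (hst : s < t) (hir : r < i) (him : i < m) :
    m*t + r - (m*s+i) = m*(t-1-s) + (m+r-i) := by
  have h1 : m*t = m*(t-1-s) + m*s + m := by
    calc m*t = m*((t-1-s)+s+1) := by rw [show (t-1-s)+s+1 = t from by omega]
    _ = m*(t-1-s) + m*s + m := by ring
  rw [h1]
  generalize m*(t-1-s) = A
  generalize m*s = B
  omega

lemma nice_core {m : ℕ} (hm : 1 ≤ m) (es fs : ℕ → ℕ → ℚ)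
    (hes : ∀ r < m, es r ∈ ExpPoly) (hfs : ∀ r < m, fs r ∈ ExpPoly) :
    NiceW m (cauchyProd (fun n => es (n % m) (n / m)) (fun n => fs (n % m) (n / m))) := by
  intro r hr
  set u0 : ℕ → ℚ := fun n => es (n % m) (n / m) with hu0def
  set v0 : ℕ → ℚ := fun n => fs (n % m) (n / m) with hv0def
  have hueval : ∀ x y, y < m → u0 (m*x+y) = es y x := fun x y hy => interlace_eval hm es x y hy
  have hveval : ∀ x y, y < m → v0 (m*x+y) = fs y x := fun x y hy => interlace_eval hm fs x y hy
  have hSE : (∑ i ∈ Ico (r+1) m, cauchyProd (es i) (fs (m+r-i)) : ℕ → ℚ) ∈ ExpPoly :=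
    Submodule.sum_mem _ fun i hi => cauchyProd_mem
      (hes i (mem_Ico.mp hi).2) (hfs (m+r-i) (by have := mem_Ico.mp hi; omega))
  obtain ⟨S', hS'E, NS, hS'⟩ := pred_mem hSE
  have hE1E : (∑ i ∈ range (r+1), cauchyProd (es i) (fs (r-i)) : ℕ → ℚ) ∈ ExpPoly :=
    Submodule.sum_mem _ fun i hi => cauchyProd_mem
      (hes i (by have := mem_range.mp hi; omega)) (hfs (r-i) (by have := mem_range.mp hi; omega))
  refine ⟨fun t => (∑ i ∈ range (r+1), cauchyProd (es i) (fs (r-i)) : ℕ → ℚ) t + S' t,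
    ExpPoly.add_mem hE1E hS'E, NS + 1, fun t ht => ?_⟩
  have ht1 : 1 ≤ t := by omega
  have e0 : cauchyProd u0 v0 (m*t+r)
      = (∑ s ∈ range t, ∑ i ∈ range m, u0 (m*s+i) * v0 (m*t+r - (m*s+i)))
        + ∑ i ∈ range (r+1), u0 (m*t+i) * v0 (m*t+r - (m*t+i)) := by
    show ∑ p ∈ range (m*t+r+1), u0 p * v0 (m*t+r-p) = _
    rw [show m*t+r+1 = m*t+(r+1) from by omega, Finset.sum_range_add, sum_range_blocks]
  have eB : ∑ i ∈ range (r+1), u0 (m*t+i) * v0 (m*t+r - (m*t+i))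
      = ∑ i ∈ range (r+1), es i t * fs (r-i) 0 := by
    refine Finset.sum_congr rfl fun i hi => ?_
    have hir : i ≤ r := by simpa [Nat.lt_succ_iff] using hi
    rw [hueval t i (by omega), Nat.add_sub_add_left]
    congr 1
    calc v0 (r-i) = v0 (m*0 + (r-i)) := by rw [Nat.mul_zero, Nat.zero_add]
    _ = fs (r-i) 0 := hveval 0 (r-i) (by omega)
  have eA : ∑ s ∈ range t, ∑ i ∈ range m, u0 (m*s+i) * v0 (m*t+r - (m*s+i))
      = ∑ i ∈ range m, ∑ s ∈ range t,
          es i s * (if i ≤ r then fs (r-i) (t-s) else fs (m+r-i) (t-1-s)) := by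
    rw [Finset.sum_comm]
    refine Finset.sum_congr rfl fun i hi => Finset.sum_congr rfl fun s hs => ?_
    have him : i < m := mem_range.mp hi
    have hst : s < t := mem_range.mp hs
    rw [hueval s i him]
    congr 1
    by_cases hir : i ≤ r
    · rw [if_pos hir, idx1 m t s r i hst hir]
      exact hveval (t-s) (r-i) (by omega)
    · rw [if_neg hir, idx2 m t s r i hst (by omega) him]
      exact hveval (t-1-s) (m+r-i) (by omega)
  have esplit : ∑ i ∈ range m, ∑ s ∈ range t,
        es i s * (if i ≤ r then fs (r-i) (t-s) else fs (m+r-i) (t-1-s))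
      = (∑ i ∈ range (r+1), ∑ s ∈ range t, es i s * fs (r-i) (t-s))
        + ∑ i ∈ Ico (r+1) m, ∑ s ∈ range t, es i s * fs (m+r-i) (t-1-s) := by
    have hsplit := Finset.sum_Ico_consecutive
      (fun i => ∑ s ∈ range t, es i s * (if i ≤ r then fs (r-i) (t-s) else fs (m+r-i) (t-1-s)))
      (Nat.zero_le (r+1)) (show r+1 ≤ m from hr)
    rw [← Finset.range_eq_Ico, ← Finset.range_eq_Ico] at hsplit
    rw [← hsplit]
    congr 1
    · refine Finset.sum_congr rfl fun i hi => Finset.sum_congr rfl fun s _ => ?_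
      rw [if_pos (by simpa [Nat.lt_succ_iff] using hi)]
    · refine Finset.sum_congr rfl fun i hi => Finset.sum_congr rfl fun s _ => ?_
      rw [if_neg (by have := mem_Ico.mp hi; omega)]
  have eX : (∑ i ∈ range (r+1), ∑ s ∈ range t, es i s * fs (r-i) (t-s))
        + ∑ i ∈ range (r+1), es i t * fs (r-i) 0
      = (∑ i ∈ range (r+1), cauchyProd (es i) (fs (r-i)) : ℕ → ℚ) t := by
    rw [Finset.sum_apply, ← sum_add_distrib]
    refine Finset.sum_congr rfl fun i hi => ?_
    show _ = ∑ s ∈ range (t+1), es i s * fs (r-i) (t-s)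
    rw [sum_range_succ, Nat.sub_self]
  have eY : (∑ i ∈ Ico (r+1) m, ∑ s ∈ range t, es i s * fs (m+r-i) (t-1-s))
      = (∑ i ∈ Ico (r+1) m, cauchyProd (es i) (fs (m+r-i)) : ℕ → ℚ) (t-1) := by
    rw [Finset.sum_apply]
    refine Finset.sum_congr rfl fun i hi => ?_
    show _ = ∑ s ∈ range ((t-1)+1), es i s * fs (m+r-i) ((t-1)-s)
    rw [show t-1+1 = t from by omega]
  show cauchyProd u0 v0 (m*t+r)
      = (∑ i ∈ range (r+1), cauchyProd (es i) (fs (r-i)) : ℕ → ℚ) t + S' t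
  rw [e0, eA, esplit, eB, hS' t (by omega), ← eX, ← eY]
  ring

lemma nice_cauchyProd {u v : ℕ → ℚ} (hu : Nice u) (hv : Nice v) : Nice (cauchyProd u v) := by
  obtain ⟨m, hm, h1, h2⟩ := nice_pair hu hv
  obtain ⟨es, hesE, Mu, hMu⟩ := niceW_exact_decomp hm h1
  obtain ⟨fs, hfsE, Mv, hMv⟩ := niceW_exact_decomp hm h2
  set u0 : ℕ → ℚ := fun n => es (n % m) (n / m) with hu0
  set v0 : ℕ → ℚ := fun n => fs (n % m) (n / m) with hv0
  have hdu : ∀ n ≥ Mu, (fun n => u n - u0 n) n = 0 := fun n hn => by simp [hMu n hn, hu0]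
  have hdv : ∀ n ≥ Mv, (fun n => v n - v0 n) n = 0 := fun n hn => by simp [hMv n hn, hv0]
  have hnu0 : Nice u0 := ⟨m, hm, nice_interlace hm es hesE⟩
  have hcore : Nice (cauchyProd u0 v0) := ⟨m, hm, nice_core hm es fs hesE hfsE⟩
  have h3 : Nice (cauchyProd (fun n => u n - u0 n) v) := nice_cauchy_finsupp Mu hdu hv
  have h4 : Nice (cauchyProd (fun n => v n - v0 n) u0) := nice_cauchy_finsupp Mv hdv hnu0
  refine nice_congr (u := fun n => cauchyProd u0 v0 n
    + (cauchyProd (fun k => v k - v0 k) u0 n + cauchyProd (fun k => u k - u0 k) v n))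
    (fun n => ?_) (nice_sum hcore (nice_sum h4 h3))
  show cauchyProd u0 v0 n + (cauchyProd (fun k => v k - v0 k) u0 n
      + cauchyProd (fun k => u k - u0 k) v n) = cauchyProd u v n
  rw [cauchyProd_comm (fun k => v k - v0 k) u0 n]
  simp only [cauchyProd]
  rw [← sum_add_distrib, ← sum_add_distrib]
  refine Finset.sum_congr rfl fun p hp => ?_
  ring

lemma polyRat_congr {u v : ℕ → ℚ} (h : ∀ n, u n = v n) (hu : PolyRat u) : PolyRat v :=
  (funext h : u = v) ▸ hu

lemma expPoly_polyRat {e : ℕ → ℚ} (he : e ∈ ExpPoly) : PolyRat e := by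
  have hb : ∀ (j : ℕ) (c : ℚ), PolyRat (fun n : ℕ => (n:ℚ)^j * c^n) := by
    intro j c
    induction j with
    | zero =>
      refine PolyRat.geo 1 c _ (by simp) (fun n => ?_)
      show ((n+1:ℕ):ℚ)^0 * c^(n+1) = c * ((n:ℚ)^0 * c^n)
      simp [pow_succ]
      ring
    | succ j ihj =>
      have hid : PolyRat (fun n : ℕ => (n:ℚ)) :=
        PolyRat.arith 0 1 _ (by simp) (fun n => by push_cast; ring)
      exact polyRat_congr (fun n => by show (n:ℚ) * ((n:ℚ)^j * c^n) = _; ring)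
        (PolyRat.had _ _ hid ihj)
  unfold ExpPoly at he
  induction he using Submodule.span_induction with
  | mem x hx =>
    obtain ⟨c, j, rfl⟩ := hx
    exact hb j c
  | zero => exact PolyRat.arith 0 0 0 (by simp) (fun n => by simp)
  | add x y hx hy ihx ihy =>
    exact polyRat_congr (fun n => by simp) (PolyRat.sum x y ihx ihy)
  | smul a x hx ihx =>
    have hc : PolyRat (fun _ : ℕ => a) := PolyRat.arith a 0 _ rfl (fun n => by simp)
    exact polyRat_congr (fun n => by simp) (PolyRat.had _ _ hc ihx)

lemma polyRat_eventually_zero : ∀ (M : ℕ) (d : ℕ → ℚ), (∀ n ≥ M, d n = 0) → PolyRat d := by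
  intro M
  induction M with
  | zero =>
    intro d h
    exact polyRat_congr (fun n => (h n (Nat.zero_le n)).symm)
      (PolyRat.arith 0 0 _ rfl (fun n => by simp))
  | succ M ih =>
    intro d h
    exact PolyRat.shift (d 0) (fun n => d (n+1)) d
      (ih _ (fun n hn => h (n+1) (by omega))) rfl (fun n => rfl)

lemma polyRat_of_eventually {u0 u : ℕ → ℚ} (h0 : PolyRat u0) (M : ℕ)
    (h : ∀ n ≥ M, u n = u0 n) : PolyRat u := by
  have hd : PolyRat (fun n => u n - u0 n) :=
    polyRat_eventually_zero M _ (fun n hn => by rw [h n hn]; ring)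
  exact polyRat_congr (fun n => by ring) (PolyRat.sum _ _ h0 hd)

lemma nice_polyRat {u : ℕ → ℚ} (hu : Nice u) : PolyRat u := by
  obtain ⟨m, hm, h⟩ := hu
  obtain ⟨es, hesE, M, hM⟩ := niceW_exact_decomp hm h
  have h0 : PolyRat (fun n => es (n % m) (n / m)) := by
    refine PolyRat.shuffle m hm (fun i => es i.val) _ (fun n i => ?_)
      (fun i => expPoly_polyRat (hesE i.val i.2))
    exact interlace_eval hm es n i.val i.2
  exact polyRat_of_eventually h0 M hM

lemma polyRat_nice {u : ℕ → ℚ} (hu : PolyRat u) : Nice u := by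
  induction hu with
  | arith a b u h0 hs =>
    have hcf : ∀ n, u n = a + n * b := by
      intro n
      induction n with
      | zero => simp [h0]
      | succ n ihn => rw [hs, ihn]; push_cast; ring
    refine ⟨1, le_refl 1, fun r hr => ?_⟩
    have hr0 : r = 0 := by omega
    subst hr0
    refine ⟨fun n => a * ((n:ℚ)^0 * 1^n) + b * ((n:ℚ)^1 * 1^n),
      ExpPoly.add_mem (expPoly_congr (fun n => by simp) (ExpPoly.smul_mem a (basic_mem 0 1)))
        (expPoly_congr (fun n => by simp) (ExpPoly.smul_mem b (basic_mem 1 1))),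
      0, fun n _ => ?_⟩
    rw [show 1*n+0 = n from by omega, hcf n]
    simp only [pow_zero, pow_one, one_pow, mul_one, one_mul]
    ring
  | geo a l u h0 hs =>
    have hcf : ∀ n, u n = a * l^n := by
      intro n
      induction n with
      | zero => simp [h0]
      | succ n ihn => rw [hs, ihn, pow_succ]; ring
    refine ⟨1, le_refl 1, fun r hr => ?_⟩
    have hr0 : r = 0 := by omega
    subst hr0
    refine ⟨fun n => a * ((n:ℚ)^0 * l^n),
      expPoly_congr (fun n => by simp) (ExpPoly.smul_mem a (basic_mem 0 l)), 0, fun n _ => ?_⟩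
    rw [show 1*n+0 = n from by omega, hcf n]
    simp
  | sum u v hu hv ihu ihv => exact nice_sum ihu ihv
  | had u v hu hv ihu ihv => exact nice_had ihu ihv
  | shift a u w hu h0 hs ihu => exact nice_shift ihu h0 hs
  | shuffle k hk us w hw hus ihus =>
    choose ms hms hNs using fun i : Fin k => ihus i
    have hm1 : 1 ≤ ∏ i, ms i := Finset.one_le_prod' (fun i _ => hms i)
    have hall : ∀ i : Fin k, NiceW (∏ j, ms j) (us i) := by
      intro i
      have hh : (∏ j, ms j) = (∏ j ∈ Finset.univ.erase i, ms j) * ms i := by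
        rw [mul_comm, Finset.mul_prod_erase _ _ (Finset.mem_univ i)]
      rw [hh]
      exact niceW_mul _ (Finset.one_le_prod' (fun j _ => hms j)) (hNs i)
    refine ⟨k * ∏ i, ms i, le_trans hk (Nat.le_mul_of_pos_right k hm1), fun ρ hρ => ?_⟩
    have hik : ρ % k < k := Nat.mod_lt _ (by omega)
    have hrm : ρ / k < ∏ i, ms i := Nat.div_lt_of_lt_mul hρ
    obtain ⟨e, heE, N, he⟩ := hall ⟨ρ % k, hik⟩ (ρ / k) hrm
    refine ⟨e, heE, N, fun n hn => ?_⟩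
    have hidx : (k*(∏ i, ms i))*n + ρ = k*((∏ i, ms i)*n + ρ/k) + ρ%k := by
      conv_lhs => rw [← Nat.div_add_mod ρ k]
      ring
    have hw' := hw ((∏ i, ms i)*n + ρ/k) ⟨ρ%k, hik⟩
    simp only [] at hw'
    rw [hidx, hw']
    exact he n hn


/-- PolyRat is closed under Cauchy product. -/
theorem polyRat_closed_under_cauchyProd (u v : ℕ → ℚ) (hu : PolyRat u) (hv : PolyRat v) :
    PolyRat (cauchyProd u v) := by
  exact nice_polyRat (nice_cauchyProd (polyRat_nice hu) (polyRat_nice hv))
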